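/- Let l be an odd prime, let ρ be a unit of Z/lZ of multiplicative order α, and let M be the 2×2 matrix over Z/lZ with rows (ρ, 1) and (0, ρ). Let H be the subgroup of GL₂(Z/lZ) generated by M and -I, acting on the set T = {(a,b) ∈ (Z/lZ)² : b ≠ 0}. Then every H-orbit in T has exactly 2·h(α)·l elements, and the number of H-orbits in T is (l-1)/(2·h(α)). -/

import Mathlib

lemma mem_closure_pair {G : Type*} [Group G] (x y : G)
    (hc : Commute x y) (hy : y * y = 1) (hx : ∃ n : ℕ, 0 < n ∧ x ^ n = 1) (g : G) :
    g ∈ Subgroup.closure {x, y} ↔ ∃ k : ℕ, g = x ^ k ∨ g = y * x ^ k := by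
  obtain ⟨n, hn, hxn⟩ := hx
  constructor
  · intro hg
    induction hg using Subgroup.closure_induction with
    | mem z hz =>
      rcases hz with rfl | rfl
      · exact ⟨1, Or.inl (pow_one z).symm⟩
      · exact ⟨0, Or.inr (by simp)⟩
    | one => exact ⟨0, Or.inl (pow_zero x).symm⟩
    | mul a b ha hb iha ihb =>
      obtain ⟨k, hk⟩ := iha
      obtain ⟨j, hj⟩ := ihb
      have hyc : ∀ m : ℕ, y * x ^ m = x ^ m * y := fun m => ((hc.symm).pow_right m).eq
      rcases hk with rfl | rfl <;> rcases hj with rfl | rfl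
      · exact ⟨k + j, Or.inl (pow_add x k j).symm⟩
      · exact ⟨k + j, Or.inr (by rw [← mul_assoc, ← hyc k, mul_assoc, ← pow_add])⟩
      · exact ⟨k + j, Or.inr (by rw [mul_assoc, ← pow_add])⟩
      · refine ⟨k + j, Or.inl ?_⟩
        rw [mul_assoc, ← mul_assoc (x ^ k) y, ← hyc k, ← mul_assoc, ← mul_assoc, hy, one_mul,
          ← pow_add]
    | inv a ha iha =>
      obtain ⟨k, hk⟩ := iha
      have hinv : (x ^ k)⁻¹ = x ^ (k * (n - 1)) := by
        rw [inv_eq_iff_mul_eq_one, ← pow_add]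
        have : k + k * (n - 1) = n * k := by
          rcases n with _ | m
          · omega
          · simp only [Nat.succ_sub_one]
            ring
        rw [this, pow_mul, hxn, one_pow]
      rcases hk with rfl | rfl
      · exact ⟨k * (n - 1), Or.inl hinv⟩
      · refine ⟨k * (n - 1), Or.inr ?_⟩
        rw [mul_inv_rev, hinv, inv_eq_iff_mul_eq_one.mpr hy,
          (((hc.symm).pow_right _).eq)]
  · rintro ⟨k, rfl | rfl⟩
    · exact pow_mem (Subgroup.subset_closure (by simp)) k
    · exact mul_mem (Subgroup.subset_closure (by simp)) (pow_mem (Subgroup.subset_closure (by simp)) k)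

lemma powA {R : Type*} [CommRing R] (r s : R) (hrs : r * s = 1) (k : ℕ) :
    (!![r, 1; 0, r] : Matrix (Fin 2) (Fin 2) R) ^ k = !![r ^ k, k * r ^ k * s; 0, r ^ k] := by
  induction k with
  | zero => simp [Matrix.one_fin_two]
  | succ n ih =>
    rw [pow_succ, ih]
    ext i j
    fin_cases i <;> fin_cases j <;>
      simp [Matrix.mul_apply, Fin.sum_univ_two, pow_succ] <;> push_cast <;>
      linear_combination (-(r ^ n)) * hrs

/-- `h(x) = x` if `x` is odd, `x/2` if `x` is even. -/
def hFun (x : ℕ) : ℕ := if Even x then x / 2 else x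

/-- The orbit of a vector `v` under a subgroup `H` of `GL₂(Z/lZ)` acting by
matrix-vector multiplication. -/
def glOrbit {l : ℕ} (H : Subgroup (GL (Fin 2) (ZMod l))) (v : Fin 2 → ZMod l) :
    Set (Fin 2 → ZMod l) :=
  {w | ∃ g ∈ H, (g : Matrix (Fin 2) (Fin 2) (ZMod l)).mulVec v = w}

theorem stmt_12 (l : ℕ) (hl : l.Prime) (hlodd : Odd l)
    (ρ : (ZMod l)ˣ) (α : ℕ) (hα : orderOf ρ = α)
    (M : GL (Fin 2) (ZMod l))
    (hM : (M : Matrix (Fin 2) (Fin 2) (ZMod l)) = !![(ρ : ZMod l), 1; 0, (ρ : ZMod l)])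
    (H : Subgroup (GL (Fin 2) (ZMod l))) (hH : H = Subgroup.closure {M, -1})
    (T : Set (Fin 2 → ZMod l)) (hT : T = {v | v 1 ≠ 0}) :
    (∀ v ∈ T, Nat.card (glOrbit H v) = 2 * hFun α * l) ∧
    Nat.card {O : Set (Fin 2 → ZMod l) | ∃ v ∈ T, O = glOrbit H v} =
      (l - 1) / (2 * hFun α) := by
  subst hH hT hα
  haveI : Fact l.Prime := ⟨hl⟩
  have hl2 : 2 < l := by
    have h1 := hl.two_le
    have h2 := Nat.odd_iff.mp hlodd
    omega
  haveI : Fact (2 < l) := ⟨hl2⟩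
  haveI : NeZero l := ⟨by omega⟩
  set r : ZMod l := (ρ : ZMod l) with hrdef
  set s : ZMod l := ((ρ⁻¹ : (ZMod l)ˣ) : ZMod l) with hsdef
  have hrs : r * s = 1 := by
    rw [hrdef, hsdef, ← Units.val_mul, mul_inv_cancel, Units.val_one]
  have hr0 : r ≠ 0 := Units.ne_zero ρ
  have hs0 : s ≠ 0 := Units.ne_zero ρ⁻¹
  have Mpow : ∀ k : ℕ,
      ((M ^ k : GL (Fin 2) (ZMod l)) : Matrix (Fin 2) (Fin 2) (ZMod l)) =
        !![r ^ k, (k : ZMod l) * r ^ k * s; 0, r ^ k] := by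
    intro k
    rw [Units.val_pow_eq_pow_val, hM]
    exact powA r s hrs k
  have MpowVec : ∀ (k : ℕ) (v : Fin 2 → ZMod l),
      ((M ^ k : GL (Fin 2) (ZMod l)) : Matrix (Fin 2) (Fin 2) (ZMod l)).mulVec v =
        ![r ^ k * v 0 + (k : ZMod l) * r ^ k * s * v 1, r ^ k * v 1] := by
    intro k v
    rw [Mpow]
    funext i
    fin_cases i <;>
      simp [Matrix.mulVec, dotProduct, Fin.sum_univ_two]
  -- characterization of H
  have memH : ∀ g : GL (Fin 2) (ZMod l),
      g ∈ Subgroup.closure {M, -1} ↔ ∃ k : ℕ, g = M ^ k ∨ g = -M ^ k := by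
    intro g
    have hcomm : Commute M (-1 : GL (Fin 2) (ZMod l)) := by
      apply Units.ext
      simp [Units.val_mul]
    have hsq : (-1 : GL (Fin 2) (ZMod l)) * (-1) = 1 := by
      apply Units.ext
      simp [Units.val_mul]
    have := mem_closure_pair M (-1) hcomm hsq
      ⟨orderOf M, orderOf_pos M, pow_orderOf_eq_one M⟩ g
    simpa [neg_one_mul] using this
  set C : Subgroup (ZMod l)ˣ := Subgroup.closure {ρ, -1} with hCdef
  have memC : ∀ c : (ZMod l)ˣ, c ∈ C ↔ ∃ k : ℕ, c = ρ ^ k ∨ c = -ρ ^ k := by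
    intro c
    have hcomm : Commute ρ (-1 : (ZMod l)ˣ) := mul_comm _ _
    have hsq : (-1 : (ZMod l)ˣ) * (-1) = 1 := by
      apply Units.ext
      simp [Units.val_mul]
    have := mem_closure_pair ρ (-1) hcomm hsq
      ⟨orderOf ρ, orderOf_pos ρ, pow_orderOf_eq_one ρ⟩ c
    simpa [neg_one_mul] using this
  have hneg1C : (-1 : (ZMod l)ˣ) ∈ C :=
    Subgroup.subset_closure (by simp)
  have hρC : ρ ∈ C := Subgroup.subset_closure (by simp)
  have hα0 : 0 < orderOf ρ := orderOf_pos ρ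
  have hcardU : Nat.card (ZMod l)ˣ = l - 1 := by
    rw [Nat.card_eq_fintype_card, ZMod.card_units_eq_totient, Nat.totient_prime hl]
  have hcoprime : Nat.Coprime (orderOf ρ) l := by
    have hdvd : orderOf ρ ∣ l - 1 := by
      rw [← hcardU, Nat.card_eq_fintype_card]
      exact orderOf_dvd_card
    have hl1 : Nat.Coprime (l - 1) l := by
      have h : l - 1 + 1 = l := by omega
      have h2 : Nat.Coprime (l - 1 + 1) (l - 1) := by
        show Nat.gcd _ _ = 1
        rw [Nat.add_comm, Nat.gcd_add_self_left]
        simp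
      rw [h] at h2
      exact h2.symm
    exact Nat.Coprime.coprime_dvd_left hdvd hl1
  -- the CRT solving lemma
  have solve : ∀ (v w : Fin 2 → ZMod l) (m : ℕ), v 1 ≠ 0 → w 1 = r ^ m * v 1 →
      ∃ k : ℕ, ((M ^ k : GL (Fin 2) (ZMod l)) :
        Matrix (Fin 2) (Fin 2) (ZMod l)).mulVec v = w := by
    intro v w m hv1 hw1
    have hden : r ^ m * s * v 1 ≠ 0 :=
      mul_ne_zero (mul_ne_zero (pow_ne_zero m hr0) hs0) hv1
    set d : ZMod l := (w 0 - r ^ m * v 0) * (r ^ m * s * v 1)⁻¹ with hd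
    obtain ⟨k, hk1, hk2⟩ : ∃ k : ℕ, k ≡ m [MOD orderOf ρ] ∧ k ≡ d.val [MOD l] :=
      ⟨_, (Nat.chineseRemainder hcoprime m d.val).prop⟩
    have hrk : r ^ k = r ^ m := by
      have h : ρ ^ k = ρ ^ m := pow_eq_pow_iff_modEq.mpr hk1
      have := congrArg Units.val h
      simpa using this
    have hkd : ((k : ℕ) : ZMod l) = d := by
      have h1 : ((k : ℕ) : ZMod l) = ((d.val : ℕ) : ZMod l) :=
        (ZMod.natCast_eq_natCast_iff _ _ _).mpr hk2
      rw [h1, ZMod.natCast_rightInverse d]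
    refine ⟨k, ?_⟩
    rw [MpowVec]
    funext i
    fin_cases i
    · show r ^ k * v 0 + (k : ZMod l) * r ^ k * s * v 1 = w 0
      rw [hrk, hkd, hd]
      field_simp
      ring
    · show r ^ k * v 1 = w 1
      rw [hrk, ← hw1]
  -- orbit characterization
  have orbitEq : ∀ v : Fin 2 → ZMod l, v 1 ≠ 0 →
      glOrbit (Subgroup.closure {M, -1}) v =
        {w | ∃ c ∈ C, w 1 = (c : ZMod l) * v 1} := by
    intro v hv
    ext w
    constructor
    · rintro ⟨g, hg, rfl⟩
      obtain ⟨k, rfl | rfl⟩ := (memH g).mp hg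
      · refine ⟨ρ ^ k, pow_mem hρC k, ?_⟩
        rw [MpowVec]
        simp [hrdef]
      · refine ⟨-ρ ^ k, by rw [← neg_one_mul]; exact mul_mem hneg1C (pow_mem hρC k), ?_⟩
        rw [Units.val_neg, Matrix.neg_mulVec, MpowVec]
        simp [hrdef]
    · rintro ⟨c, hc, hw1⟩
      obtain ⟨m, rfl | rfl⟩ := (memC c).mp hc
      · obtain ⟨k, hk⟩ := solve v w m hv (by rw [hw1]; simp [hrdef])
        exact ⟨M ^ k, (memH _).mpr ⟨k, Or.inl rfl⟩, hk⟩
      · obtain ⟨k, hk⟩ := solve v (-w) m hv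
          (by rw [Pi.neg_apply, hw1]; simp [hrdef])
        refine ⟨-M ^ k, (memH _).mpr ⟨k, Or.inr rfl⟩, ?_⟩
        rw [Units.val_neg, Matrix.neg_mulVec, hk, neg_neg]
  -- cardinality of C
  have hCcard : Nat.card C = 2 * hFun (orderOf ρ) := by
    by_cases hpar : Even (orderOf ρ)
    · have hhalf : ρ ^ (orderOf ρ / 2) = -1 := by
        have h2 : (ρ ^ (orderOf ρ / 2)) ^ 2 = 1 := by
          rw [← pow_mul, Nat.div_mul_cancel hpar.two_dvd, pow_orderOf_eq_one]
        have h2' : ((ρ : ZMod l) ^ (orderOf ρ / 2)) ^ 2 = 1 := by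
          have := congrArg Units.val h2
          simpa using this
        rcases sq_eq_one_iff.mp h2' with h | h
        · exfalso
          have h1 : ρ ^ (orderOf ρ / 2) = 1 := Units.ext (by simpa using h)
          have hdvd := orderOf_dvd_of_pow_eq_one h1
          have hpos : 0 < orderOf ρ / 2 := by
            rcases hpar with ⟨t, ht⟩; omega
          have := Nat.le_of_dvd hpos hdvd
          have hlt : orderOf ρ / 2 < orderOf ρ := Nat.div_lt_self hα0 one_lt_two
          omega
        · exact Units.ext (by simpa using h)
      have hCeq : C = Subgroup.zpowers ρ := by
        apply le_antisymm
        · rw [hCdef, Subgroup.closure_le]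
          rintro x (rfl | hx)
          · exact Subgroup.mem_zpowers x
          · simp only [Set.mem_singleton_iff] at hx
            subst hx
            rw [← hhalf]
            exact Subgroup.npow_mem_zpowers _ _
        · rw [Subgroup.zpowers_eq_closure]
          exact Subgroup.closure_mono (by simp)
      rw [hCeq, Nat.card_zpowers]
      have heq : orderOf ρ % 2 = 0 := Nat.even_iff.mp hpar
      simp only [hFun, if_pos hpar]
      omega
    · have hords : orderOf (-1 : (ZMod l)ˣ) = 2 := by
        apply orderOf_eq_prime
        · apply Units.ext; simp [Units.val_mul]
        · intro h
          exact ZMod.neg_one_ne_one (by simpa using congrArg Units.val h)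
      have hodd : Odd (orderOf ρ) := Nat.not_even_iff_odd.mp hpar
      have hCeq : C = Subgroup.zpowers (-ρ) := by
        apply le_antisymm
        · rw [hCdef, Subgroup.closure_le]
          rintro x (rfl | hx)
          · have hx2 : (-x) ^ (orderOf x + 1) = x := by
              rw [neg_pow, Even.neg_one_pow (by exact hodd.add_one), one_mul,
                pow_succ, pow_orderOf_eq_one, one_mul]
            have hmem := Subgroup.npow_mem_zpowers (-x) (orderOf x + 1)
            rwa [hx2] at hmem
          · simp only [Set.mem_singleton_iff] at hx
            subst hx
            have hx2 : (-ρ) ^ (orderOf ρ) = -1 := by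
              rw [neg_pow, Odd.neg_one_pow hodd, pow_orderOf_eq_one, mul_one]
            have hmem := Subgroup.npow_mem_zpowers (-ρ) (orderOf ρ)
            rwa [hx2] at hmem
        · rw [Subgroup.zpowers_le]
          rw [← neg_one_mul]
          exact mul_mem hneg1C hρC
      rw [hCeq, Nat.card_zpowers]
      have hcomm : Commute (-1 : (ZMod l)ˣ) ρ := mul_comm _ _
      have hcop2 : Nat.Coprime (orderOf (-1 : (ZMod l)ˣ)) (orderOf ρ) := by
        rw [hords]
        exact Nat.coprime_two_left.mpr hodd
      have hord : orderOf (-ρ) = 2 * orderOf ρ := by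
        rw [← neg_one_mul ρ, hcomm.orderOf_mul_eq_mul_orderOf_of_coprime hcop2, hords]
      rw [hord]
      simp [hFun, hpar]
  have hFunPos : 0 < hFun (orderOf ρ) := by
    unfold hFun
    split
    · rename_i hp
      rcases hp with ⟨t, ht⟩
      omega
    · omega
  -- orbit size
  have cardOrbit : ∀ v : Fin 2 → ZMod l, v 1 ≠ 0 →
      Nat.card (glOrbit (Subgroup.closure {M, -1}) v) = 2 * hFun (orderOf ρ) * l := by
    intro v hv
    rw [orbitEq v hv]
    set S : Set (ZMod l) := (fun u : (ZMod l)ˣ => (u : ZMod l) * v 1) '' (C : Set (ZMod l)ˣ)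
      with hS
    have hset : {w : Fin 2 → ZMod l | ∃ c ∈ C, w 1 = (c : ZMod l) * v 1} =
        {w | w 1 ∈ S} := by
      ext w
      simp only [Set.mem_setOf_eq, hS, Set.mem_image, SetLike.mem_coe]
      constructor
      · rintro ⟨c, hc, hw⟩; exact ⟨c, hc, hw.symm⟩
      · rintro ⟨c, hc, hw⟩; exact ⟨c, hc, hw.symm⟩
    rw [hset]
    have e : {w : Fin 2 → ZMod l | w 1 ∈ S} ≃ (ZMod l) × S :=
      { toFun := fun w => (w.1 0, ⟨w.1 1, w.2⟩)
        invFun := fun p => ⟨![p.1, p.2.1], by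
          simp only [Set.mem_setOf_eq, Matrix.cons_val_one, Matrix.head_cons]
          exact p.2.2⟩
        left_inv := by
          rintro ⟨w, hw⟩
          apply Subtype.ext
          funext i
          fin_cases i <;> rfl
        right_inv := by rintro ⟨x, y, hy⟩; rfl }
    rw [Nat.card_congr e, Nat.card_prod]
    have hcS : Nat.card S = Nat.card C := by
      have hinj : Function.Injective (fun u : (ZMod l)ˣ => (u : ZMod l) * v 1) :=
        fun a b hab => Units.ext (mul_right_cancel₀ hv hab)
      rw [hS, Nat.card_image_of_injective hinj]
      rfl
    rw [hcS, hCcard, Nat.card_zmod]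
    ring
  -- self membership
  have hself : ∀ v : Fin 2 → ZMod l, v ∈ glOrbit (Subgroup.closure {M, -1}) v := by
    intro v
    exact ⟨1, one_mem _, by simp [Matrix.one_mulVec]⟩
  -- coset inclusion helper
  have hcosetSet : ∀ a b : (ZMod l)ˣ, a⁻¹ * b ∈ C →
      {w : Fin 2 → ZMod l | ∃ c ∈ C, w 1 = (c : ZMod l) * (a : ZMod l)} ⊆
        {w | ∃ c ∈ C, w 1 = (c : ZMod l) * (b : ZMod l)} := by
    rintro a b hab w ⟨c, hc, hw⟩
    have hmem : a * b⁻¹ ∈ C := by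
      have h := inv_mem hab
      rw [mul_inv_rev, inv_inv] at h
      rwa [mul_comm]
    refine ⟨c * (a * b⁻¹), mul_mem hc hmem, ?_⟩
    have heq : (c * (a * b⁻¹)) * b = c * a := by
      rw [mul_assoc, mul_assoc, inv_mul_cancel, mul_one]
    rw [hw, ← Units.val_mul, ← heq, Units.val_mul]
  constructor
  · intro v hv
    exact cardOrbit v hv
  · -- number of orbits
    have horbmem : ∀ u : (ZMod l)ˣ,
        glOrbit (Subgroup.closure {M, -1}) ![0, (u : ZMod l)] ∈
          {O : Set (Fin 2 → ZMod l) |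
            ∃ v ∈ {v : Fin 2 → ZMod l | v 1 ≠ 0}, O = glOrbit (Subgroup.closure {M, -1}) v} := by
      intro u
      exact ⟨![0, (u : ZMod l)], by simp, rfl⟩
    have hOrb1 : ∀ u : (ZMod l)ˣ, (![0, (u : ZMod l)] : Fin 2 → ZMod l) 1 ≠ 0 := by
      intro u; simp
    set Ω := {O : Set (Fin 2 → ZMod l) |
      ∃ v ∈ {v : Fin 2 → ZMod l | v 1 ≠ 0}, O = glOrbit (Subgroup.closure {M, -1}) v}
      with hΩ
    let f : (ZMod l)ˣ ⧸ C → Ω := fun q =>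
      Quotient.liftOn' q
        (fun u => (⟨glOrbit (Subgroup.closure {M, -1}) ![0, (u : ZMod l)], horbmem u⟩ : Ω))
        (by
          intro a b hab
          have hab' : a⁻¹ * b ∈ C := QuotientGroup.leftRel_apply.mp hab
          have hba' : b⁻¹ * a ∈ C := by
            have h := inv_mem hab'
            rwa [mul_inv_rev, inv_inv] at h
          apply Subtype.ext
          show glOrbit _ ![0, (a : ZMod l)] = glOrbit _ ![0, (b : ZMod l)]
          rw [orbitEq _ (hOrb1 a), orbitEq _ (hOrb1 b)]
          simp only [Matrix.cons_val_one, Matrix.head_cons]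
          exact le_antisymm (hcosetSet a b hab') (hcosetSet b a hba'))
    have hfbij : Function.Bijective f := by
      constructor
      · intro q1 q2 h
        induction q1 using Quotient.inductionOn' with
        | h u1 =>
        induction q2 using Quotient.inductionOn' with
        | h u2 =>
        have h' : glOrbit (Subgroup.closure {M, -1}) ![0, (u1 : ZMod l)] =
            glOrbit (Subgroup.closure {M, -1}) ![0, (u2 : ZMod l)] :=
          congrArg Subtype.val h
        have hm : (![0, (u2 : ZMod l)] : Fin 2 → ZMod l) ∈
            glOrbit (Subgroup.closure {M, -1}) ![0, (u1 : ZMod l)] := by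
          rw [h']; exact hself _
        rw [orbitEq _ (hOrb1 u1)] at hm
        obtain ⟨c, hc, hw⟩ := hm
        simp only [Matrix.cons_val_one, Matrix.head_cons, Matrix.cons_val_zero] at hw
        have hu : u2 = c * u1 := Units.ext (by rw [hw, Units.val_mul])
        apply Quotient.sound'
        rw [QuotientGroup.leftRel_apply]
        rw [hu, mul_comm c u1, ← mul_assoc, inv_mul_cancel, one_mul]
        exact hc
      · rintro ⟨O, v, hv, rfl⟩
        refine ⟨QuotientGroup.mk (Units.mk0 (v 1) hv), Subtype.ext ?_⟩
        show glOrbit _ ![0, ((Units.mk0 (v 1) hv : (ZMod l)ˣ) : ZMod l)] = glOrbit _ v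
        rw [orbitEq _ (hOrb1 _), orbitEq _ hv]
        simp only [Matrix.cons_val_one, Matrix.head_cons, Matrix.cons_val_zero, Units.val_mk0]
    have hcount : Nat.card Ω = C.index := by
      unfold Subgroup.index
      exact (Nat.card_congr (Equiv.ofBijective f hfbij)).symm
    rw [hΩ] at hcount
    rw [hcount]
    have hmul := Subgroup.card_mul_index C
    rw [hCcard, hcardU] at hmul
    rw [← hmul, Nat.mul_div_cancel_left _ (by positivity)]
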